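/- Let G be a group, H a normal subgroup acting trivially on a G-module A, and Q = G/H with the induced action on A. For a finitely supported 1-cycle x : G → A define y : Q → A by y(q) = ∑_{w ∈ G with wH = q} x(w) (a finite sum since x is finitely supported). Then y is a finitely supported 1-cycle for Q, 1-boundaries are sent to 1-boundaries, and the assignment [x] ↦ [y] is a well-defined group homomorphism coinf : H₁(G, A) → H₁(Q, A). -/

import Mathlib

section Homology

/-- The map sending a finitely supported function `x : G →₀ A` to
`∑ g, (g⁻¹ • x g - x g)`; its kernel is the group of 1-cycles. -/
noncomputable def paperCycleMap (G A : Type*) [Group G] [AddCommGroup A]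
    [DistribMulAction G A] : (G →₀ A) →+ A :=
  Finsupp.liftAddHom fun g => DistribMulAction.toAddMonoidHom A g⁻¹ - AddMonoidHom.id A

/-- The group of 1-cycles: finitely supported `x : G →₀ A` with
`∑ g, g⁻¹ • x g = ∑ g, x g`. -/
noncomputable def paperZ1 (G A : Type*) [Group G] [AddCommGroup A]
    [DistribMulAction G A] : AddSubgroup (G →₀ A) :=
  (paperCycleMap G A).ker

/-- The boundary map of the inhomogeneous bar complex in degree 2: a basis element
`[g₁|g₂]` with coefficient `a` goes to
`single g₂ (g₁⁻¹ • a) - single (g₁g₂) a + single g₁ a`. -/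
noncomputable def paperBarD2 (G A : Type*) [Group G] [AddCommGroup A]
    [DistribMulAction G A] : ((G × G) →₀ A) →+ (G →₀ A) :=
  Finsupp.liftAddHom fun p =>
    (Finsupp.singleAddHom p.2).comp (DistribMulAction.toAddMonoidHom A p.1⁻¹)
      + Finsupp.singleAddHom p.1 - Finsupp.singleAddHom (p.1 * p.2)

/-- The group of 1-boundaries. -/
noncomputable def paperB1 (G A : Type*) [Group G] [AddCommGroup A]
    [DistribMulAction G A] : AddSubgroup (G →₀ A) :=
  (paperBarD2 G A).range

/-- First group homology `H₁(G, A)`: 1-cycles modulo 1-boundaries. -/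
noncomputable abbrev paperH1 (G A : Type*) [Group G] [AddCommGroup A]
    [DistribMulAction G A] :=
  paperZ1 G A ⧸ ((paperB1 G A).addSubgroupOf (paperZ1 G A))

set_option linter.unusedSectionVars false

section Aux
variable {G : Type} [Group G] (H : Subgroup G) [H.Normal] (A : Type) [AddCommGroup A]
    [DistribMulAction G A] [DistribMulAction (G ⧸ H) A] [DecidableEq (G ⧸ H)]

lemma aux_mapdom_apply (x : G →₀ A) (q : G ⧸ H) :
    Finsupp.mapDomain (QuotientGroup.mk : G → G ⧸ H) x q
      = ∑ w ∈ x.support.filter (fun w : G => (w : G ⧸ H) = q), x w := by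
  rw [Finsupp.mapDomain, Finsupp.sum_apply, Finsupp.sum, Finset.sum_filter]
  apply Finset.sum_congr rfl
  intro w _
  rw [Finsupp.single_apply]

lemma aux_cycle (hcomp : ∀ (g : G) (a : A), (g : G ⧸ H) • a = g • a) :
    (paperCycleMap (G ⧸ H) A).comp
      (Finsupp.mapDomain.addMonoidHom (QuotientGroup.mk : G → G ⧸ H))
      = paperCycleMap G A := by
  ext g a
  simp [paperCycleMap, Finsupp.mapDomain.addMonoidHom_apply, Finsupp.mapDomain_single,
    Finsupp.liftAddHom_apply_single, ← QuotientGroup.mk_inv, hcomp]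

lemma aux_bd (hcomp : ∀ (g : G) (a : A), (g : G ⧸ H) • a = g • a) :
    (Finsupp.mapDomain.addMonoidHom (QuotientGroup.mk : G → G ⧸ H)).comp (paperBarD2 G A)
      = (paperBarD2 (G ⧸ H) A).comp
        (Finsupp.mapDomain.addMonoidHom (Prod.map QuotientGroup.mk QuotientGroup.mk)) := by
  ext p a
  simp only [AddMonoidHom.comp_apply, paperBarD2, Finsupp.liftAddHom_apply_single,
    AddMonoidHom.sub_apply, AddMonoidHom.add_apply, AddMonoidHom.coe_comp,
    Function.comp_apply, Finsupp.singleAddHom_apply, DistribMulAction.toAddMonoidHom_apply,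
    map_sub, map_add]
  simp [Finsupp.mapDomain.addMonoidHom_apply, Finsupp.mapDomain_single,
    ← QuotientGroup.mk_inv, QuotientGroup.mk_mul, Prod.map, hcomp]

end Aux

/-- Let `G` be a group, `H` a normal subgroup acting trivially on the
`G`-module `A`, and `Q = G/H` with the induced action.  Pushing a finitely supported
1-cycle `x : G → A` forward to `y : Q → A`, `y q = ∑_{w ∈ G, wH = q} x w`, sends 1-cycles
to 1-cycles and induces a well-defined homomorphism `coinf : H₁(G, A) → H₁(Q, A)`. -/
theorem stmt5 {G : Type} [Group G] (H : Subgroup G) [H.Normal] (A : Type) [AddCommGroup A]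
    [DistribMulAction G A] [DistribMulAction (G ⧸ H) A] [DecidableEq (G ⧸ H)]
    (hcomp : ∀ (g : G) (a : A), (g : G ⧸ H) • a = g • a)
    (htriv : ∀ h ∈ H, ∀ a : A, h • a = a) :
    (∀ x : paperZ1 G A, ∃ y : paperZ1 (G ⧸ H) A, ∀ q : G ⧸ H,
        (y : (G ⧸ H) →₀ A) q
          = ∑ w ∈ (x : G →₀ A).support.filter (fun w : G => (w : G ⧸ H) = q),
              (x : G →₀ A) w) ∧
      ∃ coinf : paperH1 G A →+ paperH1 (G ⧸ H) A,
        ∀ (x : paperZ1 G A) (y : paperZ1 (G ⧸ H) A),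
          (∀ q : G ⧸ H, (y : (G ⧸ H) →₀ A) q
              = ∑ w ∈ (x : G →₀ A).support.filter (fun w : G => (w : G ⧸ H) = q),
                  (x : G →₀ A) w) →
            coinf (QuotientAddGroup.mk x) = QuotientAddGroup.mk y := by
  set φ : (G →₀ A) →+ ((G ⧸ H) →₀ A) :=
    Finsupp.mapDomain.addMonoidHom (QuotientGroup.mk : G → G ⧸ H) with hφ
  have hmem : ∀ x : paperZ1 G A, φ ((x : G →₀ A)) ∈ paperZ1 (G ⧸ H) A := by
    intro x
    have h1 := congrArg (fun f : (G →₀ A) →+ A => f (x : G →₀ A)) (aux_cycle H A hcomp)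
    simp only [AddMonoidHom.comp_apply] at h1
    have hx := x.2
    simp only [paperZ1, AddMonoidHom.mem_ker] at hx ⊢
    rw [← hφ] at h1
    rw [h1, hx]
  let f : paperZ1 G A →+ paperZ1 (G ⧸ H) A :=
    (φ.comp (paperZ1 G A).subtype).codRestrict _ (fun x => hmem x)
  have hf : ∀ x : paperZ1 G A, ((f x : paperZ1 (G ⧸ H) A) : (G ⧸ H) →₀ A)
      = Finsupp.mapDomain (QuotientGroup.mk : G → G ⧸ H) (x : G →₀ A) := fun x => rfl
  constructor
  · intro x
    refine ⟨f x, fun q => ?_⟩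
    rw [hf, aux_mapdom_apply]
  · have hB : (paperB1 G A).addSubgroupOf (paperZ1 G A)
        ≤ ((paperB1 (G ⧸ H) A).addSubgroupOf (paperZ1 (G ⧸ H) A)).comap f := by
      intro x hx
      rw [AddSubgroup.mem_addSubgroupOf] at hx
      obtain ⟨z, hz⟩ := hx
      rw [AddSubgroup.mem_comap, AddSubgroup.mem_addSubgroupOf]
      refine ⟨Finsupp.mapDomain.addMonoidHom
        (Prod.map QuotientGroup.mk QuotientGroup.mk) z, ?_⟩
      have h2 := congrArg (fun f : ((G × G) →₀ A) →+ ((G ⧸ H) →₀ A) => f z)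
        (aux_bd H A hcomp)
      simp only [AddMonoidHom.comp_apply] at h2
      rw [hf, ← hz, ← h2]
      rfl
    refine ⟨QuotientAddGroup.map _ _ f hB, ?_⟩
    intro x y hy
    have hxy : f x = y := by
      apply Subtype.ext
      ext q
      rw [hf, aux_mapdom_apply, hy]
    rw [QuotientAddGroup.map_mk, hxy]
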